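/- Let R be a ring, M a module over R, and N₁, N₂, N₃ submodules of M × M each containing the diagonal, with N₁ ⊓ N₂ ≤ N₃. Then the shifting property holds: for all x, y, u, v ∈ M, if (x, y) ∈ N₁, (x, y) ∈ N₃, (x, u) ∈ N₂, (y, v) ∈ N₂ and (u, v) ∈ N₁, then (u, v) ∈ N₃. -/
import Mathlib

/-- The Shifting Lemma in a category of modules for reflexive internal relations. -/
theorem shifting_lemma_submodules {R : Type*} [Ring R]
    {M : Type*} [AddCommGroup M] [Module R M]
    (N₁ N₂ N₃ : Submodule R (M × M))
    (h₁ : ∀ m : M, (m, m) ∈ N₁) (h₂ : ∀ m : M, (m, m) ∈ N₂) (h₃ : ∀ m : M, (m, m) ∈ N₃)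
    (hmeet : N₁ ⊓ N₂ ≤ N₃) :
    ∀ x y u v : M, (x, y) ∈ N₁ → (x, y) ∈ N₃ → (x, u) ∈ N₂ → (y, v) ∈ N₂ →
      (u, v) ∈ N₁ → (u, v) ∈ N₃ := by
  intro x y u v hxy1 hxy3 hxu2 hyv2 huv1
  have ht1 : (u - x + y, v - y + y) ∈ N₁ :=
    N₁.add_mem (N₁.sub_mem huv1 hxy1) (h₁ y)
  have ht2 : (u - x + y, v - y + y) ∈ N₂ := by
    have : (y - x + u, v - u + u) ∈ N₂ :=
      N₂.add_mem (N₂.sub_mem hyv2 hxu2) (h₂ u)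
    convert this using 2 <;> abel
  have ht3 : (u - x + y, v - y + y) ∈ N₃ := hmeet ⟨ht1, ht2⟩
  have := N₃.sub_mem (N₃.add_mem ht3 hxy3) (h₃ y)
  convert this using 2 <;> (try simp only [Prod.fst_add, Prod.snd_add, Prod.fst_sub, Prod.snd_sub]) <;> abel
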